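/- Suppose the law ν₀ of X₀ has a density V₀ : (0,∞) → [0,∞) with ‖V₀‖_∞ := ess sup V₀ < ∞, suppose f is Lipschitz on [0,1] with Lipschitz constant K, and suppose |α| · ‖V₀‖_∞ · K < 1. Let L be a solution of the McKean–Vlasov problem (MV) and for t > 0 define the left-limit measure ν_{t−}(S) := ℙ( X₀ + Z_t − α f(L_{t−}) ∈ S and X₀ + Z_s − α f(L_s) > 0 for all s < t ). Then for every t > 0 with L_{t−} < 1, one has inf{ x ∈ (0, 1 − L_{t−}] : ν_{t−}( [0, α(f(x + L_{t−}) − f(L_{t−}))] ) < x } = 0; that is, the jump size prescribed by the physical jump condition vanishes, so any physical solution is continuous. -/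

import Mathlib

open MeasureTheory ProbabilityTheory Filter Set Function
open scoped ENNReal

open scoped Topology

noncomputable section

variable {Ω : Type*} [MeasureSpace Ω]

/-- The event that the particle `X_s = X₀ + Z_s − α f(L_s)` has reached `(-∞, 0]` by time `t`. -/
def hitBy (X0 : Ω → ℝ) (Z : ℝ → Ω → ℝ) (f : ℝ → ℝ) (α : ℝ) (L : ℝ → ℝ) (t : ℝ) : Set Ω :=
  {ω | ∃ s ∈ Set.Icc (0 : ℝ) t, X0 ω + Z s ω - α * f (L s) ≤ 0}

/-- A solution of the McKean--Vlasov problem (MV). -/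
def IsMVSolution (X0 : Ω → ℝ) (Z : ℝ → Ω → ℝ) (f : ℝ → ℝ) (α : ℝ) (L : ℝ → ℝ) : Prop :=
  MonotoneOn L (Set.Ici 0) ∧ L 0 = 0 ∧ (∀ t, 0 ≤ t → L t ∈ Set.Icc (0 : ℝ) 1) ∧
  (∀ t, 0 ≤ t → ContinuousWithinAt L (Set.Ici t) t) ∧
  (∀ t, 0 ≤ t → L t = ((ℙ : Measure Ω) (hitBy X0 Z f α L t)).toReal)

/-- The left-limit measure
`ν_{t−}(S) = ℙ( X₀ + Z_t − α f(L_{t−}) ∈ S and X₀ + Z_s − α f(L_s) > 0 for all 0 ≤ s < t )`. -/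
def subLawLeft (X0 : Ω → ℝ) (Z : ℝ → Ω → ℝ) (f : ℝ → ℝ) (α : ℝ) (L : ℝ → ℝ) (t : ℝ) :
    Measure ℝ :=
  Measure.map (fun ω => X0 ω + Z t ω - α * f (Function.leftLim L t))
    ((ℙ : Measure Ω).restrict {ω | ∀ s ∈ Set.Ico (0 : ℝ) t, 0 < X0 ω + Z s ω - α * f (L s)})

/-- **(No jumps in the weak feedback regime.)** Suppose `ν₀` has a density `V₀` with
`‖V₀‖_∞ < ∞`, `f` is Lipschitz on `[0,1]` with constant `K`, and `|α| ⬝ ‖V₀‖_∞ ⬝ K < 1`.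
Then for every `t > 0` with `L_{t−} < 1`, the jump size prescribed by the physical jump
condition vanishes:
`inf{ x ∈ (0, 1 − L_{t−}] : ν_{t−}([0, α(f(x + L_{t−}) − f(L_{t−}))]) < x } = 0`,
i.e. there are such `x` below every `ε > 0`. -/
theorem mv_no_jumps_weak_feedback
    (hprob : IsProbabilityMeasure (ℙ : Measure Ω))
    (X0 : Ω → ℝ) (hX0meas : Measurable X0) (hX0pos : ∀ ω, 0 < X0 ω)
    (Z : ℝ → Ω → ℝ) (hZmeas : ∀ t, Measurable (Z t))
    (hZcont : ∀ ω, Continuous fun t => Z t ω)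
    (hindep : IndepFun X0 (fun ω => fun t => Z t ω) ℙ)
    (f : ℝ → ℝ) (hf : ContinuousOn f (Set.Icc 0 1)) (α : ℝ)
    (K : ℝ) (hK : ∀ y ∈ Set.Icc (0 : ℝ) 1, ∀ z ∈ Set.Icc (0 : ℝ) 1,
      |f y - f z| ≤ K * |y - z|)
    (V₀ : ℝ → ℝ) (hV₀meas : Measurable V₀) (hV₀nonneg : ∀ x, 0 ≤ V₀ x)
    (hV₀supp : ∀ x ≤ (0 : ℝ), V₀ x = 0)
    (hdens : Measure.map X0 (ℙ : Measure Ω)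
      = volume.withDensity fun x => ENNReal.ofReal (V₀ x))
    (hV₀bdd : MemLp V₀ ⊤ volume)
    (hsmall : |α| * (eLpNorm V₀ ⊤ volume).toReal * K < 1)
    (L : ℝ → ℝ) (hL : IsMVSolution X0 Z f α L)
    (t : ℝ) (ht : 0 < t) (hlt : Function.leftLim L t < 1) :
    ∀ ε > (0 : ℝ), ∃ x ∈ Set.Ioc (0 : ℝ) (1 - Function.leftLim L t),
      ((subLawLeft X0 Z f α L t)
          (Set.Icc 0 (α * (f (x + Function.leftLim L t) - f (Function.leftLim L t))))).toReal
        < x ∧ x < ε := by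
  obtain ⟨hLmono, hL0, hLmem, hLrc, hLeq⟩ := hL
  set ℓ := Function.leftLim L t with hℓdef
  set M := eLpNorm V₀ ⊤ volume with hMdef
  have hMfin : M ≠ ∞ := hV₀bdd.2.ne
  have hK0 : 0 ≤ K := by
    have h := hK 0 (by norm_num) 1 (by norm_num)
    have := abs_nonneg (f 0 - f 1)
    simp only [show |(0:ℝ) - 1| = 1 by norm_num, mul_one] at h
    linarith
  -- `ℓ = leftLim L t ≥ 0`
  have hmono' : MonotoneOn (fun s => L (max s 0)) (Iio t) := fun a _ b _ hab =>
    hLmono (le_max_right a 0) (le_max_right b 0) (max_le_max hab le_rfl)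
  have hbdd : BddAbove ((fun s => L (max s 0)) '' Iio t) := by
    refine ⟨1, ?_⟩
    rintro y ⟨s, -, rfl⟩
    exact (hLmem _ (le_max_right s 0)).2
  have htend0 : Tendsto (fun s => L (max s 0)) (𝓝[<] t)
      (𝓝 (sSup ((fun s => L (max s 0)) '' Iio t))) :=
    hmono'.tendsto_nhdsLT hbdd
  have heq : (fun s => L (max s 0)) =ᶠ[𝓝[<] t] L := by
    filter_upwards [Ioo_mem_nhdsLT ht] with s hs
    simp only [max_eq_left hs.1.le]
  have htend : Tendsto L (𝓝[<] t) (𝓝 (sSup ((fun s => L (max s 0)) '' Iio t))) :=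
    htend0.congr' heq
  have hℓtend : Tendsto L (𝓝[<] t) (𝓝 ℓ) := by
    rw [hℓdef, leftLim_eq_of_tendsto htend]
    exact htend
  have hℓ0 : 0 ≤ ℓ := by
    refine ge_of_tendsto hℓtend ?_
    filter_upwards [Ioo_mem_nhdsLT ht] with s hs
    exact (hLmem s hs.1.le).1
  -- the law of `X₀` gives mass at most `M * (v - u)` to `Icc u v`
  have hMae : ∀ᵐ x ∂(volume : Measure ℝ), ENNReal.ofReal (V₀ x) ≤ M := by
    have h := ae_le_eLpNormEssSup (f := V₀) (μ := volume)
    rw [hMdef, eLpNorm_exponent_top]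
    filter_upwards [h] with x hx
    rwa [← Real.enorm_eq_ofReal (hV₀nonneg x)]
  have hX0law : ∀ u v : ℝ,
      (Measure.map X0 (ℙ : Measure Ω)) (Icc u v) ≤ M * ENNReal.ofReal (v - u) := by
    intro u v
    rw [hdens, withDensity_apply _ measurableSet_Icc]
    calc ∫⁻ x in Icc u v, ENNReal.ofReal (V₀ x)
        ≤ ∫⁻ _ in Icc u v, M := lintegral_mono_ae (ae_restrict_of_ae hMae)
      _ = M * volume (Icc u v) := setLIntegral_const _ _
      _ = M * ENNReal.ofReal (v - u) := by rw [Real.volume_Icc]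
  -- independence: `X₀ + Z_t` lands in an interval of length `r` with probability ≤ `M r`
  have hYX : IndepFun (Z t) X0 ℙ :=
    (hindep.comp measurable_id (measurable_pi_apply t)).symm
  have hmap : (ℙ : Measure Ω).map (fun ω => (Z t ω, X0 ω))
      = ((ℙ : Measure Ω).map (Z t)).prod ((ℙ : Measure Ω).map X0) :=
    (indepFun_iff_map_prod_eq_prod_map_map (hZmeas t).aemeasurable hX0meas.aemeasurable).mp hYX
  have hiPZ : IsProbabilityMeasure ((ℙ : Measure Ω).map (Z t)) :=
    Measure.isProbabilityMeasure_map (hZmeas t).aemeasurable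
  have hkey : ∀ u v : ℝ,
      (ℙ : Measure Ω) {ω | X0 ω + Z t ω ∈ Icc u v} ≤ M * ENNReal.ofReal (v - u) := by
    intro u v
    have hsmeas : MeasurableSet {p : ℝ × ℝ | p.2 + p.1 ∈ Icc u v} :=
      (measurable_snd.add measurable_fst) measurableSet_Icc
    have h1 : (ℙ : Measure Ω) {ω | X0 ω + Z t ω ∈ Icc u v}
        = ((ℙ : Measure Ω).map (fun ω => (Z t ω, X0 ω))) {p : ℝ × ℝ | p.2 + p.1 ∈ Icc u v} := by
      rw [Measure.map_apply ((hZmeas t).prodMk hX0meas) hsmeas]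
      rfl
    rw [h1, hmap, Measure.prod_apply hsmeas]
    have h2 : ∀ y : ℝ, (Prod.mk y ⁻¹' {p : ℝ × ℝ | p.2 + p.1 ∈ Icc u v}) = Icc (u - y) (v - y) := by
      intro y
      ext x
      simp only [mem_preimage, mem_setOf_eq, mem_Icc]
      constructor <;> (rintro ⟨h1', h2'⟩; exact ⟨by linarith, by linarith⟩)
    calc ∫⁻ y, (Measure.map X0 (ℙ : Measure Ω)) (Prod.mk y ⁻¹' {p : ℝ × ℝ | p.2 + p.1 ∈ Icc u v})
          ∂((ℙ : Measure Ω).map (Z t))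
        ≤ ∫⁻ _, M * ENNReal.ofReal (v - u) ∂((ℙ : Measure Ω).map (Z t)) := by
          refine lintegral_mono fun y => ?_
          rw [h2 y]
          have := hX0law (u - y) (v - y)
          simpa [sub_sub_sub_cancel_right] using this
      _ = M * ENNReal.ofReal (v - u) := by rw [lintegral_const, measure_univ, mul_one]
  -- bound on the sub-law of intervals
  have hsub : ∀ a : ℝ,
      (subLawLeft X0 Z f α L t) (Icc 0 a) ≤ M * ENNReal.ofReal a := by
    intro a
    have hfun : Measurable fun ω => X0 ω + Z t ω - α * f (Function.leftLim L t) :=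
      (hX0meas.add (hZmeas t)).sub measurable_const
    have hle : (subLawLeft X0 Z f α L t) (Icc 0 a)
        ≤ ((ℙ : Measure Ω).map (fun ω => X0 ω + Z t ω - α * f (Function.leftLim L t)))
            (Icc 0 a) := by
      exact Measure.map_mono Measure.restrict_le_self hfun _
    refine hle.trans ?_
    rw [Measure.map_apply hfun measurableSet_Icc]
    have hset : (fun ω => X0 ω + Z t ω - α * f (Function.leftLim L t)) ⁻¹' Icc 0 a
        = {ω | X0 ω + Z t ω ∈ Icc (α * f (Function.leftLim L t)) (α * f (Function.leftLim L t) + a)} := by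
      ext ω
      simp only [mem_preimage, mem_Icc, mem_setOf_eq]
      constructor <;> (rintro ⟨h1', h2'⟩; exact ⟨by linarith, by linarith⟩)
    rw [hset]
    have := hkey (α * f (Function.leftLim L t)) (α * f (Function.leftLim L t) + a)
    simpa using this
  -- conclusion
  intro ε hε
  set x := min (ε / 2) (1 - ℓ) with hxdef
  have hx0 : 0 < x := lt_min (by linarith) (by linarith)
  have hxle : x ≤ 1 - ℓ := min_le_right _ _
  have hxε : x < ε := lt_of_le_of_lt (min_le_left _ _) (by linarith)
  refine ⟨x, ⟨hx0, hxle⟩, ?_, hxε⟩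
  set a := α * (f (x + ℓ) - f ℓ) with hadef
  have hfa : |f (x + ℓ) - f ℓ| ≤ K * x := by
    have h := hK (x + ℓ) ⟨by linarith, by linarith⟩ ℓ ⟨hℓ0, hlt.le⟩
    have : |x + ℓ - ℓ| = x := by rw [add_sub_cancel_right, abs_of_pos hx0]
    rwa [this] at h
  have ha_le : a ≤ |α| * K * x := by
    calc a ≤ |a| := le_abs_self a
      _ = |α| * |f (x + ℓ) - f ℓ| := by rw [hadef, abs_mul]
      _ ≤ |α| * (K * x) := mul_le_mul_of_nonneg_left hfa (abs_nonneg α)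
      _ = |α| * K * x := by ring
  have hcoef : 0 ≤ M.toReal * (|α| * K * x) := by positivity
  have hbound : (subLawLeft X0 Z f α L t) (Icc 0 a)
      ≤ ENNReal.ofReal (M.toReal * (|α| * K * x)) := by
    refine (hsub a).trans ?_
    rw [ENNReal.ofReal_mul ENNReal.toReal_nonneg, ENNReal.ofReal_toReal hMfin]
    exact mul_le_mul_right (ENNReal.ofReal_le_ofReal ha_le) M
  have htoReal : ((subLawLeft X0 Z f α L t) (Icc 0 a)).toReal
      ≤ M.toReal * (|α| * K * x) :=
    ENNReal.toReal_le_of_le_ofReal hcoef hbound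
  refine lt_of_le_of_lt htoReal ?_
  nlinarith [mul_pos (sub_pos.mpr hsmall) hx0]
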